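/- Let f : ℝ≥0 → ℝ≥0 be continuous with f(0) = 0 and compact support, h > 0, and let t_n, s_n denote the n-th returning and exit times of Λ_{0,h}(f) at level 0. Then for all indices 1 ≤ i < j with t_j < ∞, one has f(t_i) = f_h(t_i), f(s_i) = f_h(s_i), and inf_{[t_i, t_j]} f = inf_{[t_i, t_j]} f_h, where f_h = f − Λ_{0,h}(f). In the trees coded by f and f_h, this means the heights of the i-th leaf and the heights of the most recent common ancestor of the i-th and j-th leaves agree. -/
import Mathlib


open Set
open scoped NNReal ENNReal

/-- Solution data for the two-sided Skorohod reflection problem of `f` on `[0,h]`: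
`c0` and `ch` are the compensators at `0` and at `h`,
and `fun t => f t + ch t + c0 t` is the reflected path `Λ_{0,h}(f)`.
The support conditions on the measures `dc⁰` and `d(−cʰ)` are phrased as:
the compensator is constant on every (closed) interval on which the reflected
path avoids the corresponding boundary. -/
structure SkorohodPair (h : ℝ) (f c0 ch : ℝ≥0 → ℝ) : Prop where
  cont0 : Continuous c0
  conth : Continuous ch
  init0 : c0 0 = 0
  inith : ch 0 = 0
  mem_Icc : ∀ t, f t + ch t + c0 t ∈ Set.Icc (0 : ℝ) h
  mono0 : Monotone c0
  antih : Antitone ch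
  flat0 : ∀ a b : ℝ≥0, a ≤ b → (∀ t ∈ Set.Icc a b, f t + ch t + c0 t ≠ 0) → c0 b = c0 a
  flath : ∀ a b : ℝ≥0, a ≤ b → (∀ t ∈ Set.Icc a b, f t + ch t + c0 t ≠ h) → ch b = ch a

/-- `eInf S` : infimum of a set of times, in `ℝ≥0∞`, with the convention `inf ∅ = ∞`. -/
noncomputable def eInf (S : Set ℝ≥0) : ℝ≥0∞ := sInf ((fun x : ℝ≥0 => (x : ℝ≥0∞)) '' S)

/-- `eSup S` : supremum of a set of times, in `ℝ≥0∞`. -/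
noncomputable def eSup (S : Set ℝ≥0) : ℝ≥0∞ := sSup ((fun x : ℝ≥0 => (x : ℝ≥0∞)) '' S)

/-- `inf_{[a,s]} f`, where the left endpoint `a` may be infinite. -/
noncomputable def infBetween (f : ℝ≥0 → ℝ) (a : ℝ≥0∞) (s : ℝ≥0) : ℝ :=
  sInf (f '' {u : ℝ≥0 | a ≤ (u : ℝ≥0∞) ∧ u ≤ s})

/-- `sup_{[a,s]} f`, where the left endpoint `a` may be infinite. -/
noncomputable def supBetween (f : ℝ≥0 → ℝ) (a : ℝ≥0∞) (s : ℝ≥0) : ℝ :=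
  sSup (f '' {u : ℝ≥0 | a ≤ (u : ℝ≥0∞) ∧ u ≤ s})

/-- `θ_{n+1} = inf {s > τ_n : f s − h = inf_{[τ_n,s]} f}`. -/
noncomputable def thetaNext (h : ℝ) (f : ℝ≥0 → ℝ) (τ : ℝ≥0∞) : ℝ≥0∞ :=
  eInf {s : ℝ≥0 | τ < (s : ℝ≥0∞) ∧ f s - h = infBetween f τ s}

/-- `τ_{n+1} = inf {s > θ_{n+1} : sup_{[θ_{n+1},s]} f = f s + h}`. -/
noncomputable def tauNext (h : ℝ) (f : ℝ≥0 → ℝ) (τ : ℝ≥0∞) : ℝ≥0∞ :=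
  eInf {s : ℝ≥0 | thetaNext h f τ < (s : ℝ≥0∞) ∧
    supBetween f (thetaNext h f τ) s = f s + h}

/-- The sequence `(τ_n)` of completion times of the sub-excursions of height `h`. -/
noncomputable def tauSeq (h : ℝ) (f : ℝ≥0 → ℝ) : ℕ → ℝ≥0∞
  | 0 => 0
  | n + 1 => tauNext h f (tauSeq h f n)

/-- `σ_{n+1} = sup {s ∈ [τ_n, τ_{n+1}] : f s = inf_{[τ_n,s]} f}` (and `σ₀ = 0`). -/
noncomputable def sigmaSeq (h : ℝ) (f : ℝ≥0 → ℝ) : ℕ → ℝ≥0∞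
  | 0 => 0
  | n + 1 => eSup {s : ℝ≥0 | tauSeq h f n ≤ (s : ℝ≥0∞) ∧ (s : ℝ≥0∞) ≤ tauSeq h f (n + 1) ∧
      f s = infBetween f (tauSeq h f n) s}

/-- The returning times of a path `Λ` to level `0` after visiting level `h`:
`t₀ = 0`, `T_{n+1} = inf {u > t_n : Λ u = h}`, `t_{n+1} = inf {u > T_{n+1} : Λ u = 0}`. -/
noncomputable def retSeq (h : ℝ) (Λ : ℝ≥0 → ℝ) : ℕ → ℝ≥0∞
  | 0 => 0
  | n + 1 =>
      eInf {u : ℝ≥0 |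
        eInf {v : ℝ≥0 | retSeq h Λ n < (v : ℝ≥0∞) ∧ Λ v = h} < (u : ℝ≥0∞) ∧ Λ u = 0}

/-- The exit times of `Λ` at level `0`: `s_{n+1} = sup {u ∈ [t_n, t_{n+1}) : Λ u = 0}`. -/
noncomputable def exitSeq (h : ℝ) (Λ : ℝ≥0 → ℝ) : ℕ → ℝ≥0∞
  | 0 => 0
  | n + 1 => eSup {u : ℝ≥0 | retSeq h Λ n ≤ (u : ℝ≥0∞) ∧ (u : ℝ≥0∞) < retSeq h Λ (n + 1) ∧
      Λ u = 0}


lemma eInf_zero_lemma (L : ℝ≥0 → ℝ) (hLc : Continuous L) (S : Set ℝ≥0) (t : ℝ≥0)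
    (ht : (t : ℝ≥0∞) = eInf S) (hS : ∀ u ∈ S, L u = 0) : L t = 0 := by
  have hne : S.Nonempty := by
    by_contra hcon
    rw [Set.not_nonempty_iff_eq_empty] at hcon
    rw [hcon] at ht
    simp [eInf] at ht
  have h1 : (t : ℝ≥0∞) = ((sInf S : ℝ≥0) : ℝ≥0∞) := by
    rw [ht, eInf, sInf_image, ENNReal.coe_sInf hne]
  have h2 : t = sInf S := by exact_mod_cast h1
  have h3 : t ∈ closure S := h2 ▸ csInf_mem_closure hne (OrderBot.bddBelow S)
  have h4 : closure S ⊆ {u | L u = 0} :=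
    closure_minimal hS (isClosed_eq hLc continuous_const)
  exact h4 h3

lemma eSup_zero_lemma (L : ℝ≥0 → ℝ) (hLc : Continuous L) (hL0 : L 0 = 0)
    (S : Set ℝ≥0) (t : ℝ≥0)
    (ht : (t : ℝ≥0∞) = eSup S) (hS : ∀ u ∈ S, L u = 0) : L t = 0 := by
  rcases S.eq_empty_or_nonempty with hE | hne
  · rw [hE] at ht
    simp only [eSup, Set.image_empty, sSup_empty] at ht
    have : t = 0 := by simpa using ht
    rw [this]; exact hL0
  · rw [eSup] at ht
    have hbdd : BddAbove S := by
      refine ⟨t, fun u hu => ?_⟩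
      have : (u : ℝ≥0∞) ≤ sSup ((fun x : ℝ≥0 => (x : ℝ≥0∞)) '' S) :=
        le_sSup ⟨u, hu, rfl⟩
      rw [← ht] at this
      exact_mod_cast this
    have h1 : (t : ℝ≥0∞) = ((sSup S : ℝ≥0) : ℝ≥0∞) := by
      rw [ht, sSup_image, ENNReal.coe_sSup hbdd]
    have h2 : t = sSup S := by exact_mod_cast h1
    have h3 : t ∈ closure S := h2 ▸ csSup_mem_closure hne hbdd
    have h4 : closure S ⊆ {u | L u = 0} :=
      closure_minimal hS (isClosed_eq hLc continuous_const)
    exact h4 h3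

lemma retSeq_mono (h : ℝ) (L : ℝ≥0 → ℝ) : Monotone (retSeq h L) := by
  apply monotone_nat_of_le_succ
  intro n
  rw [retSeq]
  refine le_sInf fun b hb => ?_
  obtain ⟨u, hu, rfl⟩ := hb
  refine le_trans (le_trans ?_ hu.1.le) le_rfl
  refine le_sInf fun c hc => ?_
  obtain ⟨v, hv, rfl⟩ := hc
  exact hv.1.le

/-- **Heights of leaves and of most recent common ancestors agree in `T_f` and `T_{f_h}`**:
for `1 ≤ i < j` with `t_j < ∞` (here `t_i, t_j, s_i` are given as finite times whose
coercions equal the returning/exit times of `Λ = Λ_{0,h}(f)` at level `0`),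
`f(t_i) = f_h(t_i)`, `f(s_i) = f_h(s_i)` and `inf_{[t_i,t_j]} f = inf_{[t_i,t_j]} f_h`,
where `f_h = f − Λ`. -/
theorem heights_agree_under_h_cut
    (h : ℝ) (hh : 0 < h) (f c0 ch : ℝ≥0 → ℝ) (hf : Continuous f)
    (hpos : ∀ t, 0 ≤ f t) (hf0 : f 0 = 0) (K : ℝ≥0) (hK : ∀ t, K ≤ t → f t = 0)
    (hp : SkorohodPair h f c0 ch)
    (Λ : ℝ≥0 → ℝ) (hΛ : ∀ t, Λ t = f t + ch t + c0 t)
    (i j : ℕ) (hi : 1 ≤ i) (hij : i < j)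
    (ti tj si : ℝ≥0)
    (hti : (ti : ℝ≥0∞) = retSeq h Λ i)
    (htj : (tj : ℝ≥0∞) = retSeq h Λ j)
    (hsi : (si : ℝ≥0∞) = exitSeq h Λ i) :
    f ti = f ti - Λ ti ∧ f si = f si - Λ si ∧
    sInf (f '' Set.Icc ti tj) = sInf ((fun u => f u - Λ u) '' Set.Icc ti tj) := by
  have hΛfun : Λ = fun t => f t + ch t + c0 t := funext hΛ
  have hΛc : Continuous Λ := by
    rw [hΛfun]; exact (hf.add hp.conth).add hp.cont0
  have hΛ0 : Λ 0 = 0 := by rw [hΛ, hf0, hp.inith, hp.init0]; ring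
  have hΛnonneg : ∀ t, 0 ≤ Λ t := fun t => by rw [hΛ]; exact (hp.mem_Icc t).1
  obtain ⟨k, rfl⟩ : ∃ k, i = k + 1 := ⟨i - 1, by omega⟩
  -- Part 1 : Λ ti = 0
  have hΛti : Λ ti = 0 := by
    rw [retSeq] at hti
    exact eInf_zero_lemma Λ hΛc _ ti hti (fun u hu => hu.2)
  -- Part 2 : Λ si = 0
  have hΛsi : Λ si = 0 := by
    rw [exitSeq] at hsi
    exact eSup_zero_lemma Λ hΛc hΛ0 _ si hsi (fun u hu => hu.2.2)
  refine ⟨by rw [hΛti]; ring, by rw [hΛsi]; ring, ?_⟩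
  -- Part 3
  set g : ℝ≥0 → ℝ := fun u => f u - Λ u with hg_def
  have hgc : Continuous g := hf.sub hΛc
  have htij : ti ≤ tj := by
    have : retSeq h Λ (k + 1) ≤ retSeq h Λ j := retSeq_mono h Λ hij.le
    rw [← hti, ← htj] at this
    exact_mod_cast this
  have hIcc_ne : (Set.Icc ti tj).Nonempty := Set.nonempty_Icc.2 htij
  obtain ⟨u₀, hu₀mem, hu₀min⟩ :=
    isCompact_Icc.exists_isMinOn hIcc_ne hgc.continuousOn
  have hmin := isMinOn_iff.mp hu₀min
  -- the last zero of Λ before u₀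
  set A : Set ℝ≥0 := {w | w ∈ Set.Icc ti u₀ ∧ Λ w = 0} with hA_def
  have hAne : A.Nonempty := ⟨ti, ⟨le_rfl, hu₀mem.1⟩, hΛti⟩
  have hAbdd : BddAbove A := ⟨u₀, fun w hw => hw.1.2⟩
  have hAclosed : IsClosed A :=
    (isClosed_Icc.inter (isClosed_eq hΛc continuous_const) : IsClosed
      (Set.Icc ti u₀ ∩ {w | Λ w = 0}))
  set v : ℝ≥0 := sSup A with hv_def
  have hvA : v ∈ A := hAclosed.csSup_mem hAne hAbdd
  have hvti : ti ≤ v := hvA.1.1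
  have hvu₀ : v ≤ u₀ := hvA.1.2
  have hΛv : Λ v = 0 := hvA.2
  have hvtj : v ≤ tj := le_trans hvu₀ hu₀mem.2
  -- g is equal to g u₀ on (v, u₀]
  have hflat : ∀ a : ℝ≥0, v < a → a ≤ u₀ → g a = g u₀ := by
    intro a hva hau
    have hnz : ∀ t ∈ Set.Icc a u₀, f t + ch t + c0 t ≠ 0 := by
      intro t htm hcon
      have hΛt : Λ t = 0 := by rw [hΛ]; exact hcon
      have htA : t ∈ A := ⟨⟨le_trans hvti (le_trans hva.le htm.1), htm.2⟩, hΛt⟩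
      have : t ≤ v := le_csSup hAbdd htA
      exact absurd (lt_of_lt_of_le hva htm.1) (not_lt.2 this)
    have hc0 : c0 u₀ = c0 a := hp.flat0 a u₀ hau hnz
    have hch : ch u₀ ≤ ch a := hp.antih hau
    have hle : g a ≤ g u₀ := by
      have ha' : g a = -(ch a + c0 a) := by
        simp only [hg_def, hΛ]; ring
      have hu' : g u₀ = -(ch u₀ + c0 u₀) := by
        simp only [hg_def, hΛ]; ring
      rw [ha', hu', hc0]; linarith
    have hge : g u₀ ≤ g a :=
      hmin a ⟨le_trans hvti (le_trans hva.le le_rfl), le_trans hau hu₀mem.2⟩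
    linarith
  -- g v = g u₀
  have hgv : g v = g u₀ := by
    rcases eq_or_lt_of_le hvu₀ with heq | hlt
    · rw [heq]
    · have hNB : (nhdsWithin v (Set.Ioc v u₀)).NeBot := left_nhdsWithin_Ioc_neBot hlt
      have h1 : Filter.Tendsto g (nhdsWithin v (Set.Ioc v u₀)) (nhds (g v)) :=
        (hgc.tendsto v).mono_left nhdsWithin_le_nhds
      have h2 : Filter.Tendsto g (nhdsWithin v (Set.Ioc v u₀)) (nhds (g u₀)) := by
        refine Filter.Tendsto.congr' ?_ tendsto_const_nhds
        filter_upwards [self_mem_nhdsWithin] with a ha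
        exact (hflat a ha.1 ha.2).symm
      exact tendsto_nhds_unique h1 h2
  have hfv : f v = g u₀ := by
    have : f v = g v := by simp only [hg_def, hΛv]; ring
    rw [this, hgv]
  have hvmem : v ∈ Set.Icc ti tj := ⟨hvti, hvtj⟩
  -- compute both infima
  have hbddf : BddBelow (f '' Set.Icc ti tj) :=
    (isCompact_Icc.image hf).bddBelow
  have hbddg : BddBelow (g '' Set.Icc ti tj) :=
    (isCompact_Icc.image hgc).bddBelow
  have hInf_f : sInf (f '' Set.Icc ti tj) = g u₀ := by
    apply le_antisymm
    · have : f v ∈ f '' Set.Icc ti tj := ⟨v, hvmem, rfl⟩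
      calc sInf (f '' Set.Icc ti tj) ≤ f v := csInf_le hbddf this
        _ = g u₀ := hfv
    · refine le_csInf (hIcc_ne.image f) ?_
      rintro b ⟨w, hw, rfl⟩
      calc g u₀ ≤ g w := hmin w hw
        _ ≤ f w := by simp only [hg_def]; linarith [hΛnonneg w]
  have hInf_g : sInf (g '' Set.Icc ti tj) = g u₀ := by
    apply le_antisymm
    · exact csInf_le hbddg ⟨u₀, hu₀mem, rfl⟩
    · refine le_csInf (hIcc_ne.image g) ?_
      rintro b ⟨w, hw, rfl⟩
      exact hmin w hw
  rw [hInf_f, hInf_g]
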